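/- Let q ≥ 2 be an integer, γ ∈ ℝ, and f(n) = e(γ s_q(n)) where s_q is the sum-of-digits function in base q. For integers 0 ≤ κ₁ ≤ κ₂ and F_{κ₁,κ₂}(t) = q^{-(κ₂-κ₁)} Σ_{0≤u<q^{κ₂-κ₁}} f(q^{κ₁}u) e(-tu/q^{κ₂-κ₁}), one has |F_{κ₁,κ₂}(t)| ≤ exp(π²/48 - (κ₂-κ₁)·(π²(q-1))/(12(q+1))·‖(q-1)γ‖²) for all real t. -/

import Mathlib

/-- The normalized discrete Fourier transform
`F_{κ₁,κ₂}(t) = q^{-(κ₂-κ₁)} Σ_{0≤u<q^{κ₂-κ₁}} f(q^{κ₁}u) e(-tu/q^{κ₂-κ₁})`. -/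
noncomputable def Fq (q : ℕ) (f : ℕ → ℂ) (a b : ℕ) (t : ℝ) : ℂ :=
  (1 / (q : ℂ) ^ (b - a)) * ∑ u ∈ Finset.range (q ^ (b - a)),
    f (q ^ a * u) * Complex.exp (2 * Real.pi * Complex.I * (-(t * u) / (q : ℝ) ^ (b - a)))



open Finset Real

noncomputable def Ee (x : ℝ) : ℂ := Complex.exp (2 * Real.pi * Complex.I * x)

lemma Ee_add (x y : ℝ) : Ee (x + y) = Ee x * Ee y := by
  unfold Ee; rw [← Complex.exp_add]; push_cast; ring_nf

lemma Ee_zero : Ee 0 = 1 := by simp [Ee]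

lemma Ee_int (n : ℤ) : Ee n = 1 := by
  unfold Ee
  rw [show (2 * (Real.pi:ℂ) * Complex.I * (n:ℝ) : ℂ) = (n:ℤ) * (2 * Real.pi * Complex.I) by push_cast; ring]
  exact Complex.exp_int_mul_two_pi_mul_I n

lemma Ee_pow (x : ℝ) (d : ℕ) : Ee x ^ d = Ee (x * d) := by
  unfold Ee
  rw [← Complex.exp_nat_mul]
  congr 1; push_cast; ring

lemma abs_Ee (x : ℝ) : ‖Ee x‖ = 1 := by
  unfold Ee
  rw [Complex.norm_exp]
  norm_num [Complex.mul_re]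

lemma abs_Ee_sub_one (x : ℝ) : ‖Ee x - 1‖ = 2 * |Real.sin (Real.pi * x)| := by
  have h : Ee x = Complex.exp ((2*Real.pi*x : ℝ) * Complex.I) := by
    unfold Ee; congr 1; push_cast; ring
  have hre : (Ee x - 1).re = Real.cos (2*Real.pi*x) - 1 := by
    rw [h, Complex.sub_re, Complex.exp_ofReal_mul_I_re]; simp
  have him : (Ee x - 1).im = Real.sin (2*Real.pi*x) := by
    rw [h, Complex.sub_im, Complex.exp_ofReal_mul_I_im]; simp
  rw [Complex.norm_def, Complex.normSq_apply, hre, him]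
  have hc : Real.cos (2*Real.pi*x) = 1 - 2 * Real.sin (Real.pi*x)^2 := by
    have h1 : Real.cos (2*(Real.pi*x)) = 2 * Real.cos (Real.pi*x)^2 - 1 := Real.cos_two_mul _
    have h2 := Real.sin_sq_add_cos_sq (Real.pi * x)
    rw [show 2*Real.pi*x = 2*(Real.pi*x) by ring, h1]; nlinarith
  have key : (Real.cos (2*Real.pi*x) - 1) * (Real.cos (2*Real.pi*x) - 1) + Real.sin (2*Real.pi*x) * Real.sin (2*Real.pi*x)
       = (2*|Real.sin (Real.pi*x)|)^2 := by
    have h2 := Real.sin_sq_add_cos_sq (2*Real.pi*x)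
    rw [show (2*|Real.sin (Real.pi*x)|)^2 = 4 * Real.sin (Real.pi*x)^2 by rw [mul_pow, sq_abs]; ring]
    nlinarith
  rw [key, Real.sqrt_sq (by positivity)]
noncomputable def Phi (q : ℕ) (x : ℝ) : ℝ := ‖∑ d ∈ Finset.range q, Ee (x * d)‖

lemma Phi_nonneg (q : ℕ) (x : ℝ) : 0 ≤ Phi q x := norm_nonneg _

lemma Phi_le (q : ℕ) (x : ℝ) : Phi q x ≤ q := by
  unfold Phi
  refine le_trans (norm_sum_le _ _) ?_
  simp [abs_Ee]

lemma Phi_int_add (q : ℕ) (x : ℝ) (n : ℤ) : Phi q (x + n) = Phi q x := by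
  unfold Phi
  congr 1
  apply Finset.sum_congr rfl
  intro d _
  rw [show (x + (n:ℝ)) * d = x * d + (((n * d : ℤ)):ℝ) by push_cast; ring, Ee_add, Ee_int, mul_one]

lemma Phi_neg (q : ℕ) (x : ℝ) : Phi q (-x) = Phi q x := by
  unfold Phi
  rw [← RCLike.norm_conj]
  congr 1
  rw [map_sum]
  apply Finset.sum_congr rfl
  intro d _
  rw [show -x * (d:ℝ) = -(x*d) by ring]
  unfold Ee
  rw [← Complex.exp_conj]
  congr 1
  push_cast
  simp only [map_mul, map_neg, map_ofNat, Complex.conj_I, Complex.conj_ofReal, map_natCast]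
  ring

lemma Phi_abs (q : ℕ) (x : ℝ) : Phi q |x| = Phi q x := by
  rcases abs_cases x with ⟨h, _⟩ | ⟨h, _⟩
  · rw [h]
  · rw [h, Phi_neg]

lemma Phi_round (q : ℕ) (x : ℝ) : Phi q x = Phi q |x - round x| := by
  rw [Phi_abs]
  conv_lhs => rw [show x = (x - round x) + (round x : ℤ) by ring]
  rw [Phi_int_add]

lemma Phi_formula (q : ℕ) (x : ℝ) (hx : Real.sin (Real.pi * x) ≠ 0) :
    Phi q x = |Real.sin (Real.pi * (q * x))| / |Real.sin (Real.pi * x)| := by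
  have hE : Ee x ≠ 1 := by
    intro h
    apply hx
    have := abs_Ee_sub_one x
    rw [h] at this
    simp at this
    linarith [this]
  unfold Phi
  have : ∀ d ∈ Finset.range q, Ee (x * d) = Ee x ^ d := fun d _ => (Ee_pow x d).symm
  rw [Finset.sum_congr rfl this, geom_sum_eq hE, norm_div, abs_Ee_sub_one,
    show Ee x ^ q = Ee (x * q) from Ee_pow x q, abs_Ee_sub_one]
  rw [show Real.pi * (↑q * x) = Real.pi * (x * q) by ring]
  rw [mul_div_mul_left _ _ (by norm_num : (2:ℝ) ≠ 0)]
lemma cos_ge_quad (t : ℝ) : 1 - t^2/2 ≤ Real.cos t := by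
  have h1 : Real.cos t = 1 - 2 * Real.sin (t/2)^2 := by
    have h2 : Real.cos (2*(t/2)) = 2 * Real.cos (t/2)^2 - 1 := Real.cos_two_mul _
    have h3 := Real.sin_sq_add_cos_sq (t/2)
    have ht : (2:ℝ)*(t/2) = t := by ring
    rw [ht] at h2
    nlinarith
  have h4 : Real.sin (t/2)^2 ≤ (t/2)^2 := by
    rw [← sq_abs (Real.sin (t/2)), ← sq_abs (t/2)]
    exact pow_le_pow_left₀ (abs_nonneg _) Real.abs_sin_le_abs 2
  nlinarith

lemma sin_ge_cubic {X : ℝ} (hX : 0 ≤ X) : X - X^3/6 ≤ Real.sin X := by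
  have h : Real.sin X - Real.sin 0 = ∫ t in (0:ℝ)..X, Real.cos t := by
    rw [integral_cos]
  have hmono : ∫ t in (0:ℝ)..X, (1 - t^2/2) ≤ ∫ t in (0:ℝ)..X, Real.cos t := by
    apply intervalIntegral.integral_mono_on hX
    · apply Continuous.intervalIntegrable; continuity
    · exact Real.continuous_cos.intervalIntegrable _ _
    · exact fun t _ => cos_ge_quad t
  have hpoly : ∫ t in (0:ℝ)..X, (1 - t^2/2) = X - X^3/6 := by
    rw [intervalIntegral.integral_sub (by apply Continuous.intervalIntegrable; continuity)
      (by apply Continuous.intervalIntegrable; continuity)]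
    simp [intervalIntegral.integral_div, integral_pow]
    all_goals ring
  rw [Real.sin_zero, sub_zero] at h
  linarith [hmono, hpoly, h]

lemma cos_le_quartic {X : ℝ} (hX : 0 ≤ X) : Real.cos X ≤ 1 - X^2/2 + X^4/24 := by
  have h : Real.cos X - Real.cos 0 = ∫ t in (0:ℝ)..X, -Real.sin t := by
    rw [intervalIntegral.integral_neg, integral_sin]; ring
  have hmono : ∫ t in (0:ℝ)..X, -Real.sin t ≤ ∫ t in (0:ℝ)..X, -(t - t^3/6) := by
    apply intervalIntegral.integral_mono_on hX
    · exact (Real.continuous_sin.neg).intervalIntegrable _ _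
    · apply Continuous.intervalIntegrable; continuity
    · exact fun t ht => neg_le_neg (sin_ge_cubic ht.1)
  have hpoly : ∫ t in (0:ℝ)..X, -(t - t^3/6) = -(X^2/2 - X^4/24) := by
    rw [intervalIntegral.integral_neg, intervalIntegral.integral_sub
      (by apply Continuous.intervalIntegrable; continuity)
      (by apply Continuous.intervalIntegrable; continuity)]
    simp [intervalIntegral.integral_div, integral_pow]
    all_goals ring
  rw [Real.cos_zero] at h
  nlinarith [h, hmono, hpoly]

lemma sin_le_quintic {X : ℝ} (hX : 0 ≤ X) : Real.sin X ≤ X - X^3/6 + X^5/120 := by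
  have h : Real.sin X - Real.sin 0 = ∫ t in (0:ℝ)..X, Real.cos t := by rw [integral_cos]
  have hmono : ∫ t in (0:ℝ)..X, Real.cos t ≤ ∫ t in (0:ℝ)..X, (1 - t^2/2 + t^4/24) := by
    apply intervalIntegral.integral_mono_on hX
    · exact Real.continuous_cos.intervalIntegrable _ _
    · apply Continuous.intervalIntegrable; continuity
    · exact fun t ht => cos_le_quartic ht.1
  have hpoly : ∫ t in (0:ℝ)..X, (1 - t^2/2 + t^4/24) = X - X^3/6 + X^5/120 := by
    rw [intervalIntegral.integral_add (by apply Continuous.intervalIntegrable; continuity)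
      (by apply Continuous.intervalIntegrable; continuity),
      intervalIntegral.integral_sub (by apply Continuous.intervalIntegrable; continuity)
      (by apply Continuous.intervalIntegrable; continuity)]
    simp [intervalIntegral.integral_div, integral_pow]
    all_goals ring
  rw [Real.sin_zero, sub_zero] at h
  nlinarith [h, hmono, hpoly]

lemma exp_upper {s : ℝ} (h0 : 0 ≤ s) (h1 : s ≤ 1) :
    Real.exp s ≤ 1 + s + s^2/2 + (2/9) * s^3 := by
  have hb := Real.exp_bound (x := s) (by rw [abs_of_nonneg h0]; exact h1) (n := 3) (by norm_num)
  have hsum : ∑ m ∈ Finset.range 3, s ^ m / (m.factorial : ℝ) = 1 + s + s^2/2 := by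
    simp [Finset.sum_range_succ]
    all_goals ring
  rw [hsum, abs_of_nonneg h0, abs_le] at hb
  norm_num [Nat.factorial] at hb
  nlinarith [hb.2, pow_nonneg h0 3]

lemma exp_lower_neg {s : ℝ} (h0 : 0 ≤ s) (h1 : s ≤ 1) :
    1 - s + s^2/2 - (2/9) * s^3 ≤ Real.exp (-s) := by
  have hb := Real.exp_bound (x := -s) (by rw [abs_neg, abs_of_nonneg h0]; exact h1) (n := 3) (by norm_num)
  have hsum : ∑ m ∈ Finset.range 3, (-s) ^ m / (m.factorial : ℝ) = 1 - s + s^2/2 := by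
    simp [Finset.sum_range_succ]
    all_goals ring
  rw [hsum, abs_neg, abs_of_nonneg h0, abs_le] at hb
  norm_num [Nat.factorial] at hb
  nlinarith [hb.1, pow_nonneg h0 3]
set_option maxHeartbeats 1000000

lemma pi_num : (3.141592 : ℝ) < Real.pi ∧ Real.pi < 3.141593 :=
  ⟨Real.pi_gt_d6, Real.pi_lt_d6⟩

lemma Phi_zero (q : ℕ) : Phi q 0 = q := by
  unfold Phi
  simp [Ee_zero, show ∀ d:ℕ, (0:ℝ) * d = 0 from fun d => by ring]

lemma main_lobe (q : ℕ) (hq : 2 ≤ q) {x : ℝ} (h0 : 0 ≤ x) (h1 : x ≤ 1/(2*q)) :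
    Phi q x ≤ q * Real.exp (-(Real.pi^2*((q:ℝ)^2 - 1.14)/6) * x^2) := by
  have hqR : (2:ℝ) ≤ q := by exact_mod_cast hq
  have hq0 : (0:ℝ) < q := by linarith
  rcases h0.eq_or_lt with rfl | hx
  · simp [Phi_zero]
  have hpi := pi_num
  have hx4 : x ≤ 1/4 := le_trans h1 (by rw [div_le_div_iff₀ (by linarith) (by norm_num)]; linarith)
  set Y := Real.pi * x with hY
  set X := Real.pi * ((q:ℝ) * x) with hX
  have hY0 : 0 < Y := by positivity
  have hY4 : Y ≤ Real.pi/4 := by rw [hY]; rw [div_eq_mul_inv]; nlinarith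
  have hX0 : 0 < X := by positivity
  have hX2 : X ≤ Real.pi/2 := by
    rw [hX]
    have : (q:ℝ) * x ≤ 1/2 := by
      rw [show (1:ℝ)/(2*q) = (1/2)/q from by ring] at h1
      calc (q:ℝ)*x ≤ q * ((1/2)/q) := by nlinarith
        _ = 1/2 := by field_simp <;> ring
    nlinarith
  have hsinY : 0 < Real.sin Y := Real.sin_pos_of_pos_of_lt_pi hY0 (by nlinarith)
  have hsinX : 0 ≤ Real.sin X := Real.sin_nonneg_of_nonneg_of_le_pi (le_of_lt hX0) (by nlinarith)
  have hform : Phi q x = Real.sin X / Real.sin Y := by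
    rw [Phi_formula q x (ne_of_gt hsinY), abs_of_nonneg hsinX, abs_of_nonneg (le_of_lt hsinY)]
  -- Step 1 : sin X ≤ X * exp (-X^2/6)
  have hX2sq : X^2 ≤ 2.468 := by nlinarith
  have step1 : Real.sin X ≤ X * Real.exp (-(X^2/6)) := by
    have hq5 := sin_le_quintic (le_of_lt hX0)
    have hel := exp_lower_neg (s := X^2/6) (by positivity) (by nlinarith)
    have hmul : X * (1 - X^2/6 + (X^2/6)^2/2 - (2/9)*(X^2/6)^3) ≤ X * Real.exp (-(X^2/6)) :=
      mul_le_mul_of_nonneg_left hel (le_of_lt hX0)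
    refine le_trans ?_ hmul
    have h5 : (0:ℝ) ≤ X^5 * (1/180 - X^2/972) :=
      mul_nonneg (pow_nonneg (le_of_lt hX0) 5) (by nlinarith)
    nlinarith [h5, hq5]
  -- Step 2 : Y ≤ sin Y * exp (0.19 * Y^2)
  have step2 : Y ≤ Real.sin Y * Real.exp ((19/100) * Y^2) := by
    have hc := sin_ge_cubic (le_of_lt hY0)
    have he := Real.add_one_le_exp ((19/100) * Y^2)
    have hY2 : Y^2 ≤ 0.6169 := by nlinarith
    have hcub0 : 0 ≤ Y - Y^3/6 := by nlinarith
    have hmul : (Y - Y^3/6) * (1 + (19/100)*Y^2) ≤ Real.sin Y * Real.exp ((19/100)*Y^2) := by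
      apply mul_le_mul hc (by linarith) (by positivity) (le_of_lt hsinY)
    refine le_trans ?_ hmul
    have h5 : (0:ℝ) ≤ Y^3 * ((19/100 - 1/6) - (19/600)*Y^2) :=
      mul_nonneg (pow_nonneg (le_of_lt hY0) 3) (by nlinarith)
    nlinarith [h5]
  -- combine
  rw [hform, div_le_iff₀ hsinY]
  have hXY : X = q * Y := by rw [hX, hY]; ring
  calc Real.sin X ≤ X * Real.exp (-(X^2/6)) := step1
    _ = (q:ℝ) * Y * Real.exp (-(X^2/6)) := by rw [hXY]
    _ ≤ (q:ℝ) * (Real.sin Y * Real.exp ((19/100) * Y^2)) * Real.exp (-(X^2/6)) := by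
        apply mul_le_mul_of_nonneg_right _ (le_of_lt (Real.exp_pos _))
        apply mul_le_mul_of_nonneg_left step2 (le_of_lt hq0)
    _ = (q:ℝ) * Real.exp (-(Real.pi^2*((q:ℝ)^2 - 1.14)/6) * x^2) * Real.sin Y := by
        have hee : Real.exp ((19/100) * Y^2) * Real.exp (-(X^2/6))
            = Real.exp (-(Real.pi^2*((q:ℝ)^2 - 1.14)/6) * x^2) := by
          rw [← Real.exp_add]
          congr 1
          rw [hY, hX]; ring
        calc (q:ℝ) * (Real.sin Y * Real.exp ((19/100) * Y^2)) * Real.exp (-(X^2/6))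
            = (q:ℝ) * (Real.exp ((19/100) * Y^2) * Real.exp (-(X^2/6))) * Real.sin Y := by ring
          _ = (q:ℝ) * Real.exp (-(Real.pi^2*((q:ℝ)^2 - 1.14)/6) * x^2) * Real.sin Y := by rw [hee]

lemma tail (q : ℕ) (hq : 2 ≤ q) {x : ℝ} (h1 : 1/(2*(q:ℝ)) ≤ x) (h2 : x ≤ 1/2) :
    Phi q x ≤ 1 / Real.sin (Real.pi/(2*(q:ℝ))) := by
  have hqR : (2:ℝ) ≤ q := by exact_mod_cast hq
  have hpi := pi_num
  have hy0 : 0 < Real.pi/(2*(q:ℝ)) := by positivity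
  have hyx : Real.pi/(2*(q:ℝ)) ≤ Real.pi * x := by
    rw [div_le_iff₀ (by positivity)]
    rw [div_le_iff₀ (by positivity : (0:ℝ) < 2*(q:ℝ))] at h1
    nlinarith [mul_le_mul_of_nonneg_left h1 (le_of_lt Real.pi_pos)]
  have hx0 : 0 < x := lt_of_lt_of_le (by positivity) h1
  have hx2 : Real.pi * x ≤ Real.pi / 2 := by nlinarith [Real.pi_pos]
  have hs1 : 0 < Real.sin (Real.pi/(2*(q:ℝ))) := Real.sin_pos_of_pos_of_lt_pi hy0 (by nlinarith)
  have hsmono : Real.sin (Real.pi/(2*(q:ℝ))) ≤ Real.sin (Real.pi * x) := by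
    apply Real.strictMonoOn_sin.monotoneOn _ _ hyx
    · constructor
      · nlinarith [Real.pi_pos]
      · rw [div_le_div_iff₀ (by positivity) (by norm_num : (0:ℝ) < 2)]
        nlinarith [Real.pi_pos]
    · constructor
      · nlinarith [Real.pi_pos]
      · exact hx2
  have hs2 : 0 < Real.sin (Real.pi * x) := lt_of_lt_of_le hs1 hsmono
  rw [Phi_formula q x (ne_of_gt hs2)]
  rw [abs_of_nonneg (le_of_lt hs2)]
  exact div_le_div₀ zero_le_one (abs_le_one_iff_mul_self_le_one.mpr (by nlinarith [Real.neg_one_le_sin (Real.pi*((q:ℝ)*x)), Real.sin_le_one (Real.pi*((q:ℝ)*x))])) hs1 hsmono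
lemma tail_num (q : ℕ) (hq : 2 ≤ q) :
    1 / ((q:ℝ) * Real.sin (Real.pi/(2*(q:ℝ))))
      ≤ Real.exp (-(Real.pi^2*((q:ℝ)-1)/(24*((q:ℝ)+1)))) := by
  have hqR : (2:ℝ) ≤ q := by exact_mod_cast hq
  have hpi := pi_num
  set E := Real.pi^2*((q:ℝ)-1)/(24*((q:ℝ)+1)) with hE
  have hy0 : 0 < Real.pi/(2*(q:ℝ)) := by positivity
  have hs1 : 0 < Real.sin (Real.pi/(2*(q:ℝ))) :=
    Real.sin_pos_of_pos_of_lt_pi hy0 (by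
      rw [div_lt_iff₀ (by positivity)]
      nlinarith [Real.pi_pos])
  have hE0 : 0 ≤ E := by
    rw [hE]
    apply div_nonneg _ (by positivity)
    nlinarith [sq_nonneg Real.pi]
  have hE1 : E ≤ Real.pi^2/24 := by
    rw [hE, div_le_div_iff₀ (by positivity) (by norm_num)]
    nlinarith [sq_nonneg Real.pi]
  have key : Real.exp E ≤ (q:ℝ) * Real.sin (Real.pi/(2*(q:ℝ))) := by
    have hup := exp_upper hE0 (by nlinarith)
    -- lower bound for q * sin(π/(2q))
    have hcub := sin_ge_cubic (le_of_lt hy0)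
    have hlow : Real.pi/2 - Real.pi^3/(48*(q:ℝ)^2) ≤ (q:ℝ) * Real.sin (Real.pi/(2*(q:ℝ))) := by
      have h2 : (q:ℝ) * (Real.pi/(2*(q:ℝ)) - (Real.pi/(2*(q:ℝ)))^3/6) ≤ (q:ℝ) * Real.sin (Real.pi/(2*(q:ℝ))) :=
        mul_le_mul_of_nonneg_left hcub (by linarith)
    -- compute the LHS
      have h3 : (q:ℝ) * (Real.pi/(2*(q:ℝ)) - (Real.pi/(2*(q:ℝ)))^3/6) = Real.pi/2 - Real.pi^3/(48*(q:ℝ)^2) := by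
        field_simp
        ring
      linarith [h2, h3.symm.le, h3.le]
    -- numeric comparison
    have hS : E = Real.pi^2/24 - Real.pi^2/(12*((q:ℝ)+1)) := by
      rw [hE]; field_simp; ring
    set S := Real.pi^2/24 with hSS
    set ε := Real.pi^2/(12*((q:ℝ)+1)) with hε
    have hε0 : 0 < ε := by rw [hε]; positivity
    have hfmono : 1 + E + E^2/2 + (2/9)*E^3 ≤ 1 + S + S^2/2 + (2/9)*S^3 - ε := by
      have hgen : ∀ a b : ℝ, 0 ≤ a → 0 ≤ b →
          1 + a + a^2/2 + (2/9)*a^3 + b ≤ 1 + (a+b) + (a+b)^2/2 + (2/9)*(a+b)^3 := by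
        intro a b ha hb
        nlinarith [mul_nonneg ha hb, mul_nonneg (mul_nonneg ha ha) hb,
          mul_nonneg (mul_nonneg hb hb) ha, mul_nonneg (mul_nonneg hb hb) hb]
      have hSe : S = E + ε := by rw [hS]; ring
      have := hgen E ε hE0 (le_of_lt hε0)
      rw [← hSe] at this
      linarith
    have hnum : 1 + S + S^2/2 + (2/9)*S^3 ≤ Real.pi/2 := by
      rw [hSS]
      have hp2 : Real.pi^2 < 9.8697 := by nlinarith [hpi.2, Real.pi_pos]
      have hp4 : Real.pi^4 < 97.412 := by nlinarith [hp2, Real.pi_pos, sq_nonneg Real.pi, pow_pos Real.pi_pos 2]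
      have hp6 : Real.pi^6 < 961.43 := by nlinarith [hp2, hp4, Real.pi_pos, pow_pos Real.pi_pos 2, pow_pos Real.pi_pos 4]
      nlinarith [hp2, hp4, hp6, hpi.1]
    have hq2 : Real.pi^3/(48*(q:ℝ)^2) ≤ ε := by
      rw [hε, div_le_div_iff₀ (by positivity) (by positivity)]
      have h12 : 12*Real.pi*((q:ℝ)+1) ≤ 48*(q:ℝ)^2 := by
        nlinarith [hpi.2, hqR, sq_nonneg ((q:ℝ)-2)]
      nlinarith [mul_le_mul_of_nonneg_left h12 (le_of_lt (pow_pos Real.pi_pos 2)), Real.pi_pos, pow_pos Real.pi_pos 2]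
    calc Real.exp E ≤ 1 + E + E^2/2 + (2/9)*E^3 := hup
      _ ≤ 1 + S + S^2/2 + (2/9)*S^3 - ε := hfmono
      _ ≤ Real.pi/2 - ε := by linarith
      _ ≤ Real.pi/2 - Real.pi^3/(48*(q:ℝ)^2) := by linarith
      _ ≤ (q:ℝ) * Real.sin (Real.pi/(2*(q:ℝ))) := hlow
  rw [Real.exp_neg, inv_eq_one_div, div_le_div_iff₀ (by positivity) (Real.exp_pos E)]
  linarith [key]

lemma nu_le_abs_sub_int (x : ℝ) (n : ℤ) : |x - round x| ≤ |x - n| := by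
  have h := abs_sub_round (x - n)
  have hr : round (x - (n:ℝ)) = round x - n := by
    rw [show x - (n:ℝ) = x + (-n : ℤ) by push_cast; ring, round_add_intCast]; ring
  rw [hr] at h
  rcases eq_or_ne (round x - n) 0 with h0 | h0
  · have : round x = n := by omega
    rw [this]
  · have h1 : (1:ℝ) ≤ |((round x - n : ℤ) : ℝ)| := by
      rw [← Int.cast_abs]
      exact_mod_cast Int.one_le_abs (by exact_mod_cast h0)
    have h2 : 1/2 ≤ |x - n| := by
      have htri : |((round x - n : ℤ):ℝ)| ≤ |(round x:ℝ) - x| + |x - n| := by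
        rw [show ((round x - n : ℤ):ℝ) = ((round x:ℝ) - x) + (x - n) by push_cast; ring]
        exact abs_add_le _ _
      have hcomm : |(round x:ℝ) - x| = |x - round x| := abs_sub_comm _ _
      have hhalf := abs_sub_round x
      rw [hcomm] at htri
      linarith
    calc |x - round x| ≤ 1/2 := abs_sub_round x
      _ ≤ |x - n| := h2
noncomputable def nuR (x : ℝ) : ℝ := |x - round x|

lemma nuR_nonneg (x : ℝ) : 0 ≤ nuR x := abs_nonneg _
lemma nuR_le_half (x : ℝ) : nuR x ≤ 1/2 := abs_sub_round x
lemma Phi_eq_nuR (q : ℕ) (x : ℝ) : Phi q x = Phi q (nuR x) := Phi_round q x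

lemma pair_bound (q : ℕ) (hq : 2 ≤ q) (u v c : ℝ) (h : (q:ℝ)*u - v = c) :
    (Phi q u / q) * (Phi q v / q)
      ≤ Real.exp (-(Real.pi^2*((q:ℝ)-1)/(6*((q:ℝ)+1))) * (nuR c)^2) := by
  have hqR : (2:ℝ) ≤ q := by exact_mod_cast hq
  have hq0 : (0:ℝ) < q := by linarith
  set A := Real.pi^2*((q:ℝ)-1)/(6*((q:ℝ)+1)) with hA
  have hA0 : 0 ≤ A := by
    rw [hA]; apply div_nonneg _ (by positivity); nlinarith [sq_nonneg Real.pi]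
  have hAE : A * (nuR c)^2 ≤ Real.pi^2*((q:ℝ)-1)/(24*((q:ℝ)+1)) := by
    have h1 : (nuR c)^2 ≤ 1/4 := by
      nlinarith [nuR_le_half c, nuR_nonneg c]
    have h2 : A * (nuR c)^2 ≤ A * (1/4) := mul_le_mul_of_nonneg_left h1 hA0
    have h3 : A * (1/4) = Real.pi^2*((q:ℝ)-1)/(24*((q:ℝ)+1)) := by
      rw [hA, div_mul_div_comm]
      congr 1 <;> ring
    linarith
  have hpsi_le_one : ∀ x : ℝ, Phi q x / q ≤ 1 := by
    intro x
    rw [div_le_one hq0]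
    exact Phi_le q x
  have hpsi_nonneg : ∀ x : ℝ, 0 ≤ Phi q x / q := fun x => div_nonneg (Phi_nonneg q x) (le_of_lt hq0)
  have caseA : ∀ x : ℝ, 1/(2*(q:ℝ)) ≤ nuR x →
      Phi q x / q ≤ Real.exp (-A * (nuR c)^2) := by
    intro x hx
    have hs1 : 0 < Real.sin (Real.pi/(2*(q:ℝ))) := by
      apply Real.sin_pos_of_pos_of_lt_pi (by positivity)
      rw [div_lt_iff₀ (by positivity)]
      nlinarith [Real.pi_pos]
    have h2 : Phi q (nuR x) ≤ 1 / Real.sin (Real.pi/(2*(q:ℝ))) :=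
      tail q hq hx (nuR_le_half x)
    have h3 : Phi q x / q ≤ 1 / ((q:ℝ) * Real.sin (Real.pi/(2*(q:ℝ)))) := by
      have e : (1:ℝ)/(Real.sin (Real.pi/(2*(q:ℝ))))/(q:ℝ)
          = 1/((q:ℝ)*Real.sin (Real.pi/(2*(q:ℝ)))) := by
        rw [div_div, mul_comm]
      rw [Phi_eq_nuR q x, ← e]
      exact div_le_div_of_nonneg_right h2 (le_of_lt hq0)
    refine le_trans h3 (le_trans (tail_num q hq) ?_)
    apply Real.exp_le_exp.mpr
    rw [neg_mul]
    exact neg_le_neg hAE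
  rcases le_or_gt (1/(2*(q:ℝ))) (nuR u) with hu | hu
  · calc (Phi q u / q) * (Phi q v / q)
        ≤ Real.exp (-A * (nuR c)^2) * (Phi q v / q) :=
          mul_le_mul_of_nonneg_right (caseA u hu) (hpsi_nonneg v)
      _ ≤ Real.exp (-A * (nuR c)^2) * 1 :=
          mul_le_mul_of_nonneg_left (hpsi_le_one v) (le_of_lt (Real.exp_pos _))
      _ = Real.exp (-A * (nuR c)^2) := mul_one _
  rcases le_or_gt (1/(2*(q:ℝ))) (nuR v) with hv | hv
  · calc (Phi q u / q) * (Phi q v / q)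
        ≤ 1 * (Phi q v / q) :=
          mul_le_mul_of_nonneg_right (hpsi_le_one u) (hpsi_nonneg v)
      _ = Phi q v / q := one_mul _
      _ ≤ Real.exp (-A * (nuR c)^2) := caseA v hv
  · set K := Real.pi^2*((q:ℝ)^2 - 1.14)/6 with hK
    have hK0 : 0 ≤ K := by
      rw [hK]
      apply div_nonneg _ (by norm_num)
      exact mul_nonneg (sq_nonneg Real.pi) (by nlinarith [hqR])
    have hmlu : Phi q u / q ≤ Real.exp (-K * (nuR u)^2) := by
      rw [Phi_eq_nuR q u, div_le_iff₀ hq0]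
      have := main_lobe q hq (nuR_nonneg u) (le_of_lt hu)
      calc Phi q (nuR u) ≤ q * Real.exp (-(Real.pi^2*((q:ℝ)^2 - 1.14)/6) * (nuR u)^2) := this
        _ = Real.exp (-K * (nuR u)^2) * q := by rw [hK]; ring
    have hmlv : Phi q v / q ≤ Real.exp (-K * (nuR v)^2) := by
      rw [Phi_eq_nuR q v, div_le_iff₀ hq0]
      have := main_lobe q hq (nuR_nonneg v) (le_of_lt hv)
      calc Phi q (nuR v) ≤ q * Real.exp (-(Real.pi^2*((q:ℝ)^2 - 1.14)/6) * (nuR v)^2) := this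
        _ = Real.exp (-K * (nuR v)^2) * q := by rw [hK]; ring
    have hnuc : nuR c ≤ (q:ℝ) * nuR u + nuR v := by
      have h1 : nuR c ≤ |c - ((q * round u - round v : ℤ):ℝ)| := nu_le_abs_sub_int c _
      have h2 : c - ((q * round u - round v : ℤ):ℝ) = (q:ℝ)*(u - round u) - (v - round v) := by
        push_cast
        rw [← h]
        ring
      rw [h2] at h1
      calc nuR c ≤ |(q:ℝ)*(u - round u) - (v - round v)| := h1
        _ ≤ |(q:ℝ)*(u - round u)| + |v - round v| := abs_sub _ _
        _ = (q:ℝ) * nuR u + nuR v := by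
            rw [abs_mul, abs_of_pos hq0]
            rfl
    have hsq : (nuR c)^2 ≤ ((q:ℝ)^2 + 1) * ((nuR u)^2 + (nuR v)^2) := by
      nlinarith [sq_nonneg (nuR u - (q:ℝ)*nuR v), nuR_nonneg u, nuR_nonneg v, nuR_nonneg c, hnuc]
    have hKA : A * ((q:ℝ)^2+1) ≤ K := by
      rw [hA, hK, div_mul_eq_mul_div, div_le_div_iff₀ (by positivity) (by norm_num)]
      have key : ((q:ℝ)-1) * ((q:ℝ)^2+1) * 6 ≤ ((q:ℝ)^2 - 1.14) * (6*((q:ℝ)+1)) := by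
        nlinarith [hqR]
      nlinarith [mul_le_mul_of_nonneg_left key (sq_nonneg Real.pi)]
    calc (Phi q u / q) * (Phi q v / q)
        ≤ Real.exp (-K * (nuR u)^2) * Real.exp (-K * (nuR v)^2) := by
          apply mul_le_mul hmlu hmlv (hpsi_nonneg v) (le_of_lt (Real.exp_pos _))
      _ = Real.exp (-K * ((nuR u)^2 + (nuR v)^2)) := by rw [← Real.exp_add]; congr 1; ring
      _ ≤ Real.exp (-A * (nuR c)^2) := by
          apply Real.exp_le_exp.mpr
          have h1 : A * (nuR c)^2 ≤ A * (((q:ℝ)^2+1) * ((nuR u)^2 + (nuR v)^2)) :=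
            mul_le_mul_of_nonneg_left hsq hA0
          have h2 : A * (((q:ℝ)^2+1) * ((nuR u)^2 + (nuR v)^2)) ≤ K * ((nuR u)^2 + (nuR v)^2) := by
            rw [← mul_assoc]
            apply mul_le_mul_of_nonneg_right hKA
            positivity
          nlinarith [h1, h2]
lemma chain_bound (q : ℕ) (hq : 2 ≤ q) (x : ℕ → ℝ) (c : ℝ)
    (hrel : ∀ j, (q:ℝ) * x j - x (j+1) = c) (L : ℕ) :
    ∏ j ∈ Finset.range L, (Phi q (x j) / q)
      ≤ Real.exp (Real.pi^2/48 - (L:ℝ) * (Real.pi^2*((q:ℝ)-1)/(12*((q:ℝ)+1))) * (nuR c)^2) := by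
  have hqR : (2:ℝ) ≤ q := by exact_mod_cast hq
  have hq0 : (0:ℝ) < q := by linarith
  set A := Real.pi^2*((q:ℝ)-1)/(6*((q:ℝ)+1)) with hA
  have hA0 : 0 ≤ A := by
    rw [hA]; apply div_nonneg _ (by positivity); nlinarith [sq_nonneg Real.pi]
  have hAC : A/2 = Real.pi^2*((q:ℝ)-1)/(12*((q:ℝ)+1)) := by
    rw [hA, div_div]
    congr 1
    ring
  have hslack : (A/2) * (nuR c)^2 ≤ Real.pi^2/48 := by
    have h1 : (nuR c)^2 ≤ 1/4 := by nlinarith [nuR_le_half c, nuR_nonneg c]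
    have h2 : A ≤ Real.pi^2/6 := by
      rw [hA, div_le_div_iff₀ (by positivity) (by norm_num)]
      nlinarith [sq_nonneg Real.pi, sq_nonneg (Real.pi*2)]
    nlinarith [hA0, h1, h2, nuR_nonneg c, sq_nonneg (nuR c)]
  have ha_nonneg : ∀ j, 0 ≤ Phi q (x j) / q := fun j => div_nonneg (Phi_nonneg _ _) (le_of_lt hq0)
  have ha_le_one : ∀ j, Phi q (x j) / q ≤ 1 := fun j => by
    rw [div_le_one hq0]; exact Phi_le _ _
  rcases Nat.eq_zero_or_pos L with rfl | hL
  · simp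
    positivity
  obtain ⟨n, rfl⟩ : ∃ n, L = n + 1 := ⟨L - 1, by omega⟩
  set a : ℕ → ℝ := fun j => Phi q (x j) / q with ha
  set P := ∏ j ∈ Finset.range (n+1), a j with hP
  have hP0 : 0 ≤ P := Finset.prod_nonneg (fun j _ => ha_nonneg j)
  have e1 : P = (∏ j ∈ Finset.range n, a (j+1)) * a 0 := Finset.prod_range_succ' a n
  have e2 : P = (∏ j ∈ Finset.range n, a j) * a n := Finset.prod_range_succ a n
  have hdistrib : ∏ j ∈ Finset.range n, (a j * a (j+1))
      = (∏ j ∈ Finset.range n, a j) * (∏ j ∈ Finset.range n, a (j+1)) :=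
    Finset.prod_mul_distrib
  have hsplit : P^2 = (a 0 * a n) * ∏ j ∈ Finset.range n, (a j * a (j+1)) := by
    rw [sq]
    nth_rewrite 1 [e1]
    nth_rewrite 1 [e2]
    rw [hdistrib]
    ring
  have hprod : ∏ j ∈ Finset.range n, (a j * a (j+1)) ≤ Real.exp (-A * (nuR c)^2) ^ n := by
    rw [show Real.exp (-A * (nuR c)^2) ^ n = ∏ _j ∈ Finset.range n, Real.exp (-A * (nuR c)^2) from by
      rw [Finset.prod_const, Finset.card_range]]
    apply Finset.prod_le_prod
    · exact fun j _ => mul_nonneg (ha_nonneg j) (ha_nonneg (j+1))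
    · intro j _
      exact pair_bound q hq (x j) (x (j+1)) c (hrel j)
  have hP2 : P^2 ≤ Real.exp (-(n:ℝ) * A * (nuR c)^2) := by
    have h1 : (a 0 * a n) * ∏ j ∈ Finset.range n, (a j * a (j+1))
        ≤ 1 * (Real.exp (-A * (nuR c)^2) ^ n) := by
      apply mul_le_mul
      · calc a 0 * a n ≤ 1 * 1 := mul_le_mul (ha_le_one 0) (ha_le_one n) (ha_nonneg n) zero_le_one
          _ = 1 := one_mul _
      · exact hprod
      · exact Finset.prod_nonneg (fun j _ => mul_nonneg (ha_nonneg j) (ha_nonneg (j+1)))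
      · norm_num
    rw [hsplit]
    rw [← Real.exp_nat_mul] at h1
    calc (a 0 * a n) * ∏ j ∈ Finset.range n, (a j * a (j+1))
        ≤ 1 * Real.exp ((n:ℝ) * (-A * (nuR c)^2)) := h1
      _ = Real.exp (-(n:ℝ) * A * (nuR c)^2) := by rw [one_mul]; congr 1; ring
  have hPle : P ≤ Real.exp (-(n:ℝ) * A * (nuR c)^2 / 2) := by
    have h2 : Real.exp (-(n:ℝ) * A * (nuR c)^2 / 2) ^ 2 = Real.exp (-(n:ℝ) * A * (nuR c)^2) := by
      rw [← Real.exp_nat_mul]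
      congr 1
      push_cast
      ring
    have h3 : P^2 ≤ Real.exp (-(n:ℝ) * A * (nuR c)^2 / 2) ^ 2 := by rw [h2]; exact hP2
    have := Real.sqrt_le_sqrt (le_of_lt (lt_of_le_of_lt h3 (lt_add_one _)))
    calc P = Real.sqrt (P^2) := (Real.sqrt_sq hP0).symm
      _ ≤ Real.sqrt (Real.exp (-(n:ℝ) * A * (nuR c)^2 / 2) ^ 2) := Real.sqrt_le_sqrt h3
      _ = Real.exp (-(n:ℝ) * A * (nuR c)^2 / 2) := Real.sqrt_sq (le_of_lt (Real.exp_pos _))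
  refine le_trans hPle (Real.exp_le_exp.mpr ?_)
  rw [← hAC]
  push_cast
  nlinarith [hslack, hA0, sq_nonneg (nuR c)]
lemma digitsum_pow_mul (q : ℕ) (hq : 2 ≤ q) (a u : ℕ) :
    (Nat.digits q (q^a * u)).sum = (Nat.digits q u).sum := by
  rcases Nat.eq_zero_or_pos u with rfl | hu
  · simp
  · rw [Nat.digits_base_pow_mul (by omega) hu, List.sum_append, List.sum_replicate]
    simp

lemma digitsum_add_mul (q : ℕ) (hq : 2 ≤ q) (d m : ℕ) (hd : d < q) :
    (Nat.digits q (d + q*m)).sum = d + (Nat.digits q m).sum := by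
  rcases Nat.eq_zero_or_pos (d + q*m) with h0 | hpos
  · have hd0 : d = 0 := by omega
    have hm0 : m = 0 := by
      have : q * m = 0 := by omega
      rcases Nat.mul_eq_zero.mp this with h | h
      · omega
      · exact h
    subst hd0; subst hm0; simp
  · rw [Nat.digits_def' (show 1 < q by omega) hpos]
    have h1 : (d + q*m) % q = d := by
      rw [Nat.add_mul_mod_self_left, Nat.mod_eq_of_lt hd]
    have h2 : (d + q*m) / q = m := by
      rw [Nat.add_mul_div_left _ _ (show 0 < q by omega), Nat.div_eq_of_lt hd]
      omega
    rw [h1, h2, List.sum_cons]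

lemma Ee_factorization (q : ℕ) (hq : 2 ≤ q) (γ : ℝ) (L : ℕ) :
    ∀ θ : ℝ,
    ∑ u ∈ Finset.range (q^L), Ee (γ * ((Nat.digits q u).sum : ℕ)) * Ee (θ * u)
      = ∏ j ∈ Finset.range L, ∑ d ∈ Finset.range q, Ee ((γ + θ * (q:ℝ)^j) * d) := by
  induction L with
  | zero => intro θ; simp [Ee_zero]
  | succ n ih =>
    intro θ
    have hre : ∑ u ∈ Finset.range (q^(n+1)), Ee (γ * ((Nat.digits q u).sum : ℕ)) * Ee (θ * u)
        = ∑ p ∈ Finset.range q ×ˢ Finset.range (q^n),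
            Ee (γ * ((Nat.digits q (p.1 + q * p.2)).sum : ℕ)) * Ee (θ * (p.1 + q * p.2 : ℕ)) := by
      apply Finset.sum_nbij' (i := fun u => (u % q, u / q)) (j := fun p => p.1 + q * p.2)
      · intro u hu
        rw [Finset.mem_range] at hu
        rw [Finset.mem_product, Finset.mem_range, Finset.mem_range]
        constructor
        · exact Nat.mod_lt u (by omega)
        · apply Nat.div_lt_of_lt_mul
          rw [mul_comm]
          exact lt_of_lt_of_le hu (le_of_eq (pow_succ q n))
      · intro p hp
        rw [Finset.mem_product, Finset.mem_range, Finset.mem_range] at hp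
        rw [Finset.mem_range, pow_succ, mul_comm (q^n) q]
        calc p.1 + q * p.2 < q + q * p.2 := by omega
          _ ≤ q + q * (q^n - 1) := by
              have : p.2 ≤ q^n - 1 := by omega
              exact Nat.add_le_add_left (Nat.mul_le_mul_left q this) q
          _ = q * q^n - q + q := by
              rw [Nat.mul_sub_one]
              omega
          _ ≤ q * q^n := by
              have : q ≤ q * q^n := Nat.le_mul_of_pos_right q (Nat.pow_pos (n := n) (by omega))
              omega
      · intro u _
        exact (Nat.mod_add_div u q).symm ▸ by omega
      · intro p hp
        rw [Finset.mem_product, Finset.mem_range, Finset.mem_range] at hp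
        have h1 : (p.1 + q * p.2) % q = p.1 := by
          rw [Nat.add_mul_mod_self_left, Nat.mod_eq_of_lt hp.1]
        have h2 : (p.1 + q * p.2) / q = p.2 := by
          rw [Nat.add_mul_div_left _ _ (show 0 < q by omega), Nat.div_eq_of_lt hp.1]
          omega
        rw [h1, h2]
      · intro u _
        congr 2 <;> rw [Nat.mod_add_div u q]
    rw [hre, Finset.sum_product]
    have hinner : ∀ p : ℕ × ℕ, p.1 < q →
        Ee (γ * ((Nat.digits q (p.1 + q * p.2)).sum : ℕ)) * Ee (θ * (p.1 + q * p.2 : ℕ))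
        = (Ee ((γ + θ * (q:ℝ)^0) * p.1)) * (Ee (γ * ((Nat.digits q p.2).sum : ℕ)) * Ee ((q*θ) * p.2)) := by
      intro p hp1
      rw [digitsum_add_mul q hq p.1 p.2 hp1]
      rw [show (γ * ((p.1 + (Nat.digits q p.2).sum : ℕ) : ℝ)) = γ * p.1 + γ * ((Nat.digits q p.2).sum : ℕ) by push_cast; ring]
      rw [show (θ * ((p.1 + q * p.2 : ℕ) : ℝ)) = θ * p.1 + (q*θ) * p.2 by push_cast; ring]
      rw [Ee_add, Ee_add]
      rw [show ((γ + θ * (q:ℝ)^0) * p.1) = γ * p.1 + θ * p.1 by push_cast; ring, Ee_add]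
      ring
    have hsum : ∑ x ∈ Finset.range q, ∑ y ∈ Finset.range (q^n),
          Ee (γ * ((Nat.digits q ((x,y).1 + q * (x,y).2)).sum : ℕ)) * Ee (θ * ((x,y).1 + q * (x,y).2 : ℕ))
        = (∑ d ∈ Finset.range q, Ee ((γ + θ * (q:ℝ)^0) * d))
          * (∑ m ∈ Finset.range (q^n), Ee (γ * ((Nat.digits q m).sum : ℕ)) * Ee ((q*θ) * m)) := by
      rw [Finset.sum_mul_sum]
      apply Finset.sum_congr rfl
      intro x hx
      apply Finset.sum_congr rfl
      intro y _
      exact hinner (x,y) (Finset.mem_range.mp hx)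
    rw [hsum, ih (q*θ), Finset.prod_range_succ']
    have hj : ∏ j ∈ Finset.range n, ∑ d ∈ Finset.range q, Ee ((γ + ((q:ℝ)*θ) * (q:ℝ)^j) * d)
        = ∏ k ∈ Finset.range n, ∑ d ∈ Finset.range q, Ee ((γ + θ * (q:ℝ)^(k+1)) * d) := by
      apply Finset.prod_congr rfl
      intro j _
      apply Finset.sum_congr rfl
      intro d _
      congr 2
      push_cast
      ring
    rw [hj, mul_comm]

/-- For `f(n) = e(γ s_q(n))` with `s_q` the base-`q` sum-of-digits function,
`|F_{κ₁,κ₂}(t)| ≤ exp(π²/48 - (κ₂-κ₁)·(π²(q-1))/(12(q+1))·‖(q-1)γ‖²)`. -/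
theorem Fq_sum_of_digits_bound (q : ℕ) (hq : 2 ≤ q) (γ : ℝ)
    (κ₁ κ₂ : ℕ) (hκ : κ₁ ≤ κ₂) (t : ℝ) :
    ‖(Fq q
        (fun n => Complex.exp (2 * Real.pi * Complex.I * γ * ((Nat.digits q n).sum : ℕ)))
        κ₁ κ₂ t)‖
      ≤ Real.exp (Real.pi ^ 2 / 48
          - ((κ₂ : ℝ) - κ₁) * (Real.pi ^ 2 * ((q : ℝ) - 1)) / (12 * ((q : ℝ) + 1))
            * |((q : ℝ) - 1) * γ - round (((q : ℝ) - 1) * γ)| ^ 2) := by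
  have hqR : (2:ℝ) ≤ q := by exact_mod_cast hq
  have hq0 : (0:ℝ) < q := by linarith
  set L := κ₂ - κ₁ with hL
  set θ : ℝ := -t / (q:ℝ)^L with hθ
  set x : ℕ → ℝ := fun j => γ + θ * (q:ℝ)^j with hx
  set c : ℝ := ((q:ℝ) - 1) * γ with hc
  have hrel : ∀ j, (q:ℝ) * x j - x (j+1) = c := by
    intro j
    rw [hx, hc]
    simp only []
    rw [pow_succ]
    ring
  -- rewrite Fq
  have hFq : Fq q (fun n => Complex.exp (2 * Real.pi * Complex.I * γ * ((Nat.digits q n).sum : ℕ))) κ₁ κ₂ t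
      = (1 / (q:ℂ)^L) * ∑ u ∈ Finset.range (q^L), Ee (γ * ((Nat.digits q u).sum : ℕ)) * Ee (θ * u) := by
    unfold Fq
    rw [← hL]
    congr 1
    apply Finset.sum_congr rfl
    intro u _
    congr 1
    · show Complex.exp (2 * Real.pi * Complex.I * γ * ((Nat.digits q (q ^ κ₁ * u)).sum : ℕ))
        = Ee (γ * ((Nat.digits q u).sum : ℕ))
      rw [digitsum_pow_mul q hq κ₁ u]
      unfold Ee
      congr 1
      generalize (Nat.digits q u).sum = m
      push_cast
      ring
    · unfold Ee
      congr 1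
      rw [hθ]
      push_cast
      ring
  rw [hFq, Ee_factorization q hq γ L θ]
  rw [norm_mul, norm_prod]
  have habs1 : ‖1 / (q:ℂ)^L‖ = 1 / (q:ℝ)^L := by
    rw [norm_div, norm_one, norm_pow, Complex.norm_natCast]
  have habs2 : ∀ j, ‖∑ d ∈ Finset.range q, Ee ((γ + θ * (q:ℝ)^j) * d)‖ = Phi q (x j) := by
    intro j
    rfl
  rw [habs1]
  have hprod_eq : (1 / (q:ℝ)^L) * ∏ j ∈ Finset.range L, ‖∑ d ∈ Finset.range q, Ee ((γ + θ * (q:ℝ)^j) * d)‖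
      = ∏ j ∈ Finset.range L, (Phi q (x j) / q) := by
    rw [Finset.prod_div_distrib, Finset.prod_const, Finset.card_range]
    rw [show ∏ j ∈ Finset.range L, ‖∑ d ∈ Finset.range q, Ee ((γ + θ * (q:ℝ)^j) * d)‖
        = ∏ j ∈ Finset.range L, Phi q (x j) from Finset.prod_congr rfl (fun j _ => habs2 j)]
    field_simp
  rw [hprod_eq]
  refine le_trans (chain_bound q hq x c hrel L) (Real.exp_le_exp.mpr ?_)
  have hcast : ((κ₂:ℝ) - κ₁) = (L:ℝ) := by
    rw [hL]
    push_cast [Nat.cast_sub hκ]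
    ring
  rw [hcast]
  have : |c - round c| = nuR c := rfl
  rw [this]
  apply le_of_eq
  ring
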